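/- arXiv:1305.1025 — 2 statements merged into one kernel-verified Lean document; each statement's English description precedes it below -/
import Mathlib

section
/- Let ℏ > 0, let X and Y be real symmetric n×n matrices with Y positive definite, set M = X + iY, and define the generalized Gaussian φ_M^ℏ(x) = (det Y / (πℏ)ⁿ)^{1/4} exp(i M x·x / 2ℏ). Define the operator U on L²(ℝⁿ) by Uψ(x) = (det Y)^{1/4} exp(i X x·x / 2ℏ) ψ(Y^{1/2} x), where Y^{1/2} is the positive square root of Y. Then: (i) U is unitary on L²(ℝⁿ); (ii) U φ₀^ℏ = φ_M^ℏ, where φ₀^ℏ(x) = (πℏ)^{−n/4} exp(−|x|²/2ℏ); and (iii) U satisfies the symplectic covariance relation U ∘ T^ℏ(z) = T^ℏ(Sz) ∘ U for all z ∈ ℝ^{2n}, where S is the symplectic matrix with block form S(x,p) = (Y^{−1/2} x, X Y^{−1/2} x + Y^{1/2} p), i.e. S = [[Y^{−1/2}, 0],[X Y^{−1/2}, Y^{1/2}]] ∈ Sp(n). -/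
open MeasureTheory Matrix Complex
open scoped RealInnerProductSpace ENNReal

noncomputable section

abbrev E (n : ℕ) : Type := EuclideanSpace ℝ (Fin n)

def toE (n : ℕ) (v : Fin n → ℝ) : E n := WithLp.toLp 2 v
def fromE (n : ℕ) (v : E n) : Fin n → ℝ := WithLp.ofLp v

/-- The Heisenberg–Weyl operator `T^ℏ(z₀)`:
`T^ℏ(z₀)ψ(x) = exp(i(p₀·x − p₀·x₀/2)/ℏ) ψ(x − x₀)`. -/
def HW (n : ℕ) (hb : ℝ) (z₀ : E n × E n) (ψ : E n → ℂ) : E n → ℂ :=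
  fun x => Complex.exp (Complex.I * (((⟪z₀.2, x⟫ - ⟪z₀.2, z₀.1⟫ / 2) / hb : ℝ) : ℂ)) *
    ψ (x - z₀.1)

/-- The frame sum `∑_{z ∈ Λ} |⟨ψ, T^ℏ(z)φ⟩|²`, valued in `ℝ≥0∞`. -/
def gaborSum (n : ℕ) (hb : ℝ) (φ : E n → ℂ) (Λ : Set (E n × E n)) (ψ : E n → ℂ) : ℝ≥0∞ :=
  ∑' z : Λ, ENNReal.ofReal (‖∫ x, ψ x * (starRingEnd ℂ) (HW n hb (z : E n × E n) φ x)‖ ^ 2)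

/-- The Gabor system `G(φ,Λ)` is an `ℏ`-frame with bounds `a`, `b`:
`a‖ψ‖² ≤ ∑_{z∈Λ} |⟨ψ, T^ℏ(z)φ⟩|² ≤ b‖ψ‖²` for every `ψ ∈ L²(ℝⁿ)`. -/
def IsGaborFrame (n : ℕ) (hb : ℝ) (φ : E n → ℂ) (Λ : Set (E n × E n)) (a b : ℝ) : Prop :=
  ∀ ψ : E n → ℂ, MemLp ψ 2 volume →
    (ENNReal.ofReal (a * ∫ x, ‖ψ x‖ ^ 2) ≤ gaborSum n hb φ Λ ψ ∧
      gaborSum n hb φ Λ ψ ≤ ENNReal.ofReal (b * ∫ x, ‖ψ x‖ ^ 2))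

/-- The standard symplectic form `σ(z,z′) = p·x′ − p′·x`. -/
def sform (n : ℕ) (z w : E n × E n) : ℝ := ⟪z.2, w.1⟫ - ⟪w.2, z.1⟫

/-- The standard centered Gaussian `φ₀^ℏ(x) = (πℏ)^{−n/4} exp(−|x|²/2ℏ)`. -/
def gauss0 (n : ℕ) (hb : ℝ) : E n → ℂ :=
  fun x => ((((Real.pi * hb) ^ (-(n : ℝ) / 4) * Real.exp (-‖x‖ ^ 2 / (2 * hb))) : ℝ) : ℂ)

/-- The generalized Gaussian `φ_M^ℏ(x) = (det Y / (πℏ)ⁿ)^{1/4} exp(i M x·x / 2ℏ)`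
with `M = X + iY`. -/
def gaussM (n : ℕ) (hb : ℝ) (X Y : Matrix (Fin n) (Fin n) ℝ) : E n → ℂ :=
  fun x => (((Y.det / (Real.pi * hb) ^ n) ^ ((1 : ℝ) / 4) : ℝ) : ℂ) *
    Complex.exp (Complex.I *
      (((X.map ((↑) : ℝ → ℂ) + Complex.I • Y.map ((↑) : ℝ → ℂ)) *ᵥ
          (fun i => (x i : ℂ))) ⬝ᵥ (fun i => (x i : ℂ))) / (2 * (hb : ℂ)))

/-- The operator `Uψ(x) = (det Y)^{1/4} exp(i X x·x / 2ℏ) ψ(Y^{1/2} x)`, where the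
square root `Y^{1/2}` is given by `R`. -/
def UXY (n : ℕ) (hb : ℝ) (X R : Matrix (Fin n) (Fin n) ℝ) (Y : Matrix (Fin n) (Fin n) ℝ)
    (ψ : E n → ℂ) : E n → ℂ :=
  fun x => ((Y.det ^ ((1 : ℝ) / 4) : ℝ) : ℂ) *
    Complex.exp (Complex.I * (((X *ᵥ fromE n x) ⬝ᵥ fromE n x / (2 * hb) : ℝ) : ℂ)) *
    ψ (toE n (R *ᵥ fromE n x))

/-- The symplectic matrix `S = [[Y^{−1/2}, 0],[X Y^{−1/2}, Y^{1/2}]]`, as a map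
`S(x,p) = (Y^{−1/2}x, X Y^{−1/2}x + Y^{1/2}p)`, where `R = Y^{1/2}`. -/
def SXY (n : ℕ) (X R : Matrix (Fin n) (Fin n) ℝ) (z : E n × E n) : E n × E n :=
  (toE n (R⁻¹ *ᵥ fromE n z.1),
    toE n (X *ᵥ (R⁻¹ *ᵥ fromE n z.1) + R *ᵥ fromE n z.2))

/-! ### Auxiliary lemmas -/

namespace Stmt18Aux

variable {n : ℕ}

@[simp] lemma fromE_toE (v : Fin n → ℝ) : fromE n (toE n v) = v := rfl
@[simp] lemma toE_fromE (v : E n) : toE n (fromE n v) = v := rfl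

lemma inner_dot (v w : E n) : ⟪v, w⟫ = fromE n v ⬝ᵥ fromE n w := by
  simp [PiLp.inner_apply, dotProduct, fromE, mul_comm]

lemma mulVec_dot_comm (M : Matrix (Fin n) (Fin n) ℝ) (hM : Mᵀ = M) (v w : Fin n → ℝ) :
    (M *ᵥ v) ⬝ᵥ w = (M *ᵥ w) ⬝ᵥ v := by
  rw [dotProduct_comm, dotProduct_mulVec, ← mulVec_transpose, hM]

lemma castQuad (A : Matrix (Fin n) (Fin n) ℝ) (v : Fin n → ℝ) :
    ((A.map ((↑) : ℝ → ℂ)) *ᵥ (fun i => (v i : ℂ))) ⬝ᵥ (fun i => (v i : ℂ)) =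
      (((A *ᵥ v) ⬝ᵥ v : ℝ) : ℂ) := by
  simp only [dotProduct, mulVec, Matrix.map_apply]
  push_cast
  ring

lemma normSq_R {Y R : Matrix (Fin n) (Fin n) ℝ} (hRsym : Rᵀ = R) (hRR : R * R = Y)
    (v : Fin n → ℝ) : ‖toE n (R *ᵥ v)‖ ^ 2 = (Y *ᵥ v) ⬝ᵥ v := by
  rw [EuclideanSpace.norm_eq, Real.sq_sqrt (by positivity)]
  have : ∀ w : Fin n → ℝ, (∑ i, ‖toE n w i‖ ^ 2) = w ⬝ᵥ w := by
    intro w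
    simp [toE, dotProduct, sq_abs, pow_two]
  rw [this, dotProduct_mulVec, ← mulVec_transpose, hRsym, mulVec_mulVec, hRR]

lemma exp_shuffle (c Ψ : ℂ) (p q r s : ℝ) (h : p + q = r + s) :
    c * Complex.exp (Complex.I * (p : ℂ)) * (Complex.exp (Complex.I * (q : ℂ)) * Ψ) =
      Complex.exp (Complex.I * (r : ℂ)) * (c * Complex.exp (Complex.I * (s : ℂ)) * Ψ) := by
  rw [show c * Complex.exp (Complex.I*(p:ℂ)) * (Complex.exp (Complex.I*(q:ℂ)) * Ψ)
      = c * (Complex.exp (Complex.I*(p:ℂ)) * Complex.exp (Complex.I*(q:ℂ))) * Ψ by ring,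
    show Complex.exp (Complex.I*(r:ℂ)) * (c * Complex.exp (Complex.I*(s:ℂ)) * Ψ)
      = c * (Complex.exp (Complex.I*(r:ℂ)) * Complex.exp (Complex.I*(s:ℂ))) * Ψ by ring,
    ← Complex.exp_add, ← Complex.exp_add, ← mul_add, ← mul_add,
    ← Complex.ofReal_add, ← Complex.ofReal_add, h]

lemma norm_exp_I_real (t : ℝ) : ‖Complex.exp (Complex.I * (t : ℂ))‖ = 1 := by
  simp [Complex.norm_exp]

/-- the linear equiv of `E n` given by an invertible matrix -/
lemma norm_exp_neg_I_real (t : ℝ) : ‖Complex.exp (-(Complex.I * (t : ℂ)))‖ = 1 := by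
  rw [show -(Complex.I * (t:ℂ)) = Complex.I * ((-t : ℝ) : ℂ) by push_cast; ring]
  exact norm_exp_I_real _

def matEquiv (A : Matrix (Fin n) (Fin n) ℝ) (hA : A.det ≠ 0) : E n ≃ₗ[ℝ] E n := by
  haveI := A.invertibleOfIsUnitDet (isUnit_iff_ne_zero.2 hA)
  exact LinearEquiv.ofLinear (Matrix.toEuclideanLin A) (Matrix.toEuclideanLin A⁻¹)
    (by ext x; simp [Matrix.toEuclideanLin_apply, Matrix.mulVec_mulVec,
      Matrix.mul_nonsing_inv A (isUnit_iff_ne_zero.2 hA)])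
    (by ext x; simp [Matrix.toEuclideanLin_apply, Matrix.mulVec_mulVec,
      Matrix.nonsing_inv_mul A (isUnit_iff_ne_zero.2 hA)])

lemma det_matEquiv (A : Matrix (Fin n) (Fin n) ℝ) (hA : A.det ≠ 0) :
    LinearMap.det ((matEquiv A hA : E n ≃ₗ[ℝ] E n) : E n →ₗ[ℝ] E n) = A.det := by
  have : ((matEquiv A hA : E n ≃ₗ[ℝ] E n) : E n →ₗ[ℝ] E n) = Matrix.toEuclideanLin A := rfl
  rw [this, Matrix.toEuclideanLin_eq_toLin, LinearMap.det_toLin]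

lemma map_matEquiv (A : Matrix (Fin n) (Fin n) ℝ) (hA : A.det ≠ 0) :
    Measure.map (matEquiv A hA) (volume : Measure (E n)) =
      ENNReal.ofReal |A.det⁻¹| • volume := by
  rw [← det_matEquiv A hA]
  exact Measure.map_linearMap_addHaar_eq_smul_addHaar volume (by rw [det_matEquiv]; exact hA)

def matMeasEquiv (A : Matrix (Fin n) (Fin n) ℝ) (hA : A.det ≠ 0) : E n ≃ᵐ E n :=
  (matEquiv A hA).toContinuousLinearEquiv.toHomeomorph.toMeasurableEquiv

lemma memLp_comp_mulVec {A : Matrix (Fin n) (Fin n) ℝ} (hA : A.det ≠ 0)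
    {ψ : E n → ℂ} (hψ : MemLp ψ 2 volume) :
    MemLp (fun x => ψ (toE n (A *ᵥ fromE n x))) 2 volume := by
  have h1 : MemLp ψ 2 (Measure.map (matMeasEquiv A hA) volume) := by
    have : Measure.map (matMeasEquiv A hA) (volume : Measure (E n)) =
        ENNReal.ofReal |A.det⁻¹| • volume := map_matEquiv A hA
    rw [this]
    exact hψ.smul_measure (by simp)
  exact (memLp_map_measure_iff h1.1 (matMeasEquiv A hA).measurable.aemeasurable).1 h1

lemma integral_comp_mulVec {A : Matrix (Fin n) (Fin n) ℝ} (hA : A.det ≠ 0)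
    (g : E n → ℝ) :
    ∫ x, g (toE n (A *ᵥ fromE n x)) = |A.det⁻¹| * ∫ x, g x := by
  have h := MeasureTheory.integral_map_equiv (μ := (volume : Measure (E n)))
    (matMeasEquiv A hA) g
  have hmap : Measure.map (⇑(matMeasEquiv A hA)) (volume : Measure (E n)) =
      ENNReal.ofReal |A.det⁻¹| • volume := map_matEquiv A hA
  rw [hmap, integral_smul_measure] at h
  have : (fun x => g ((matMeasEquiv A hA) x)) = fun x => g (toE n (A *ᵥ fromE n x)) := rfl
  rw [this] at h
  rw [← h, ENNReal.toReal_ofReal (abs_nonneg _), smul_eq_mul]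

lemma contQuad (A B : Matrix (Fin n) (Fin n) ℝ) :
    Continuous fun x : E n => (A *ᵥ fromE n x) ⬝ᵥ (B *ᵥ fromE n x) := by
  simp only [dotProduct, mulVec, fromE]
  fun_prop

lemma contQuad1 (A : Matrix (Fin n) (Fin n) ℝ) :
    Continuous fun x : E n => (A *ᵥ fromE n x) ⬝ᵥ fromE n x := by
  simp only [dotProduct, mulVec, fromE]
  fun_prop

/-- `MemLp` transfer along equal pointwise norms. -/
lemma memLp_norm_eq {f g : E n → ℂ} (hg : MemLp g 2 volume)
    (hf : AEStronglyMeasurable f volume) (h : ∀ x, ‖f x‖ = ‖g x‖) :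
    MemLp f 2 volume :=
  ⟨hf, by rw [eLpNorm_congr_norm_ae (Filter.Eventually.of_forall h)]; exact hg.2⟩

end Stmt18Aux

open Stmt18Aux

/-- with `M = X + iY` (`X, Y` symmetric, `Y > 0`) and `R = Y^{1/2}`:
(i) `U` is unitary on `L²(ℝⁿ)`; (ii) `U φ₀^ℏ = φ_M^ℏ`; (iii) `U` satisfies the
symplectic covariance relation `U ∘ T^ℏ(z) = T^ℏ(Sz) ∘ U` where
`S = [[Y^{−1/2},0],[XY^{−1/2},Y^{1/2}]]` is symplectic. -/
theorem stmt18 (n : ℕ) (hb : ℝ) (hhb : 0 < hb)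
    (X Y R : Matrix (Fin n) (Fin n) ℝ)
    (hX : Xᵀ = X) (hY : Yᵀ = Y) (hYpd : Y.PosDef)
    (hRsym : Rᵀ = R) (hRpd : R.PosDef) (hRR : R * R = Y) :
    ((∀ ψ : E n → ℂ, MemLp ψ 2 volume → MemLp (UXY n hb X R Y ψ) 2 volume ∧
        ∫ x, ‖UXY n hb X R Y ψ x‖ ^ 2 = ∫ x, ‖ψ x‖ ^ 2) ∧
      (∀ ψ : E n → ℂ, MemLp ψ 2 volume →
        ∃ χ : E n → ℂ, MemLp χ 2 volume ∧ UXY n hb X R Y χ = ψ)) ∧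
    UXY n hb X R Y (gauss0 n hb) = gaussM n hb X Y ∧
    ((∀ (ψ : E n → ℂ) (z : E n × E n),
        UXY n hb X R Y (HW n hb z ψ) = HW n hb (SXY n X R z) (UXY n hb X R Y ψ)) ∧
      ∀ z w, sform n (SXY n X R z) (SXY n X R w) = sform n z w) := by
  have hdR : IsUnit R.det := isUnit_iff_ne_zero.2 (ne_of_gt hRpd.det_pos)
  have hdRne : R.det ≠ 0 := ne_of_gt hRpd.det_pos
  have hdY : (0:ℝ) < Y.det := hYpd.det_pos
  have hRRinv : ∀ v : Fin n → ℝ, R *ᵥ (R⁻¹ *ᵥ v) = v := by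
    intro v; rw [mulVec_mulVec, Matrix.mul_nonsing_inv _ hdR, one_mulVec]
  have hRinvR : ∀ v : Fin n → ℝ, R⁻¹ *ᵥ (R *ᵥ v) = v := by
    intro v; rw [mulVec_mulVec, Matrix.nonsing_inv_mul _ hdR, one_mulVec]
  have hdRinv : (R⁻¹).det ≠ 0 := by
    rw [Matrix.det_nonsing_inv]
    simpa using hdRne
  -- the constant `c = det Y ^ (1/4)` and its properties
  set c : ℝ := Y.det ^ ((1:ℝ)/4) with hc
  have hcpos : 0 < c := Real.rpow_pos_of_pos hdY _
  have hcsq : c ^ 2 = Y.det ^ ((1:ℝ)/2) := by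
    rw [hc, ← Real.rpow_natCast (Y.det ^ ((1:ℝ)/4)) 2, ← Real.rpow_mul hdY.le]
    norm_num
  have hYhalf : Y.det ^ ((1:ℝ)/2) = R.det := by
    have hYd : Y.det = R.det ^ 2 := by rw [← hRR, Matrix.det_mul, sq]
    rw [hYd, ← Real.rpow_natCast R.det 2, ← Real.rpow_mul hRpd.det_pos.le]
    norm_num
  -- norm of `UXY ψ x`
  have hnormU : ∀ (ψ : E n → ℂ) (x : E n), ‖UXY n hb X R Y ψ x‖
      = ‖((c : ℝ) : ℂ) * ψ (toE n (R *ᵥ fromE n x))‖ := by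
    intro ψ x
    simp only [UXY, norm_mul, norm_exp_I_real, ← hc]
    ring
  -- measurability of `UXY ψ`
  have haesm : ∀ ψ : E n → ℂ, MemLp ψ 2 volume →
      AEStronglyMeasurable (UXY n hb X R Y ψ) volume := by
    intro ψ hψ
    have hcont : Continuous fun x : E n => (((c : ℝ) : ℂ)) *
        Complex.exp (Complex.I * (((X *ᵥ fromE n x) ⬝ᵥ fromE n x / (2 * hb) : ℝ) : ℂ)) := by
      exact continuous_const.mul (Complex.continuous_exp.comp (continuous_const.mul
        (Complex.continuous_ofReal.comp ((contQuad1 X).div_const _))))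
    exact hcont.aestronglyMeasurable.mul (memLp_comp_mulVec hdRne hψ).1
  constructor
  · constructor
    · -- isometry
      intro ψ hψ
      have hcomp := memLp_comp_mulVec hdRne hψ
      refine ⟨memLp_norm_eq (hcomp.const_mul _) (haesm ψ hψ) (hnormU ψ), ?_⟩
      have hptw : (fun x => ‖UXY n hb X R Y ψ x‖ ^ 2)
          = fun x => Y.det ^ ((1:ℝ)/2) * ‖ψ (toE n (R *ᵥ fromE n x))‖ ^ 2 := by
        funext x
        rw [hnormU ψ x, norm_mul, mul_pow, Complex.norm_real, Real.norm_eq_abs,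
          abs_of_pos hcpos, hcsq]
      rw [hptw, integral_const_mul,
        integral_comp_mulVec hdRne (fun x => ‖ψ x‖ ^ 2), hYhalf,
        abs_of_pos (inv_pos.2 hRpd.det_pos), ← mul_assoc,
        mul_inv_cancel₀ hdRne, one_mul]
    · -- surjectivity
      intro ψ hψ
      refine ⟨fun y => ((Y.det ^ (-(1:ℝ)/4) : ℝ) : ℂ) *
          Complex.exp (-(Complex.I *
            (((X *ᵥ (R⁻¹ *ᵥ fromE n y)) ⬝ᵥ (R⁻¹ *ᵥ fromE n y) / (2 * hb) : ℝ) : ℂ))) *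
          ψ (toE n (R⁻¹ *ᵥ fromE n y)), ?_, ?_⟩
      · -- MemLp of χ
        have hcomp := memLp_comp_mulVec hdRinv hψ
        have hcont : Continuous fun y : E n => ((Y.det ^ (-(1:ℝ)/4) : ℝ) : ℂ) *
            Complex.exp (-(Complex.I *
              (((X *ᵥ (R⁻¹ *ᵥ fromE n y)) ⬝ᵥ (R⁻¹ *ᵥ fromE n y) / (2 * hb) : ℝ) : ℂ))) := by
          have hq : Continuous fun y : E n =>
              (X *ᵥ (R⁻¹ *ᵥ fromE n y)) ⬝ᵥ (R⁻¹ *ᵥ fromE n y) := by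
            have := contQuad (n := n) (X * R⁻¹) R⁻¹
            simpa only [← mulVec_mulVec] using this
          exact continuous_const.mul (Complex.continuous_exp.comp (continuous_neg.comp
            (continuous_const.mul (Complex.continuous_ofReal.comp (hq.div_const _)))))
        refine memLp_norm_eq (hcomp.const_mul (((Y.det ^ (-(1:ℝ)/4) : ℝ) : ℂ))) 
          (hcont.aestronglyMeasurable.mul hcomp.1) ?_
        intro y
        simp only [norm_mul, norm_exp_neg_I_real]
        ring
      · -- UXY χ = ψ
        funext x
        simp only [UXY, fromE_toE, hRinvR, toE_fromE]
        rw [show ((Y.det ^ ((1:ℝ)/4) : ℝ) : ℂ) *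
            Complex.exp (Complex.I * (((X *ᵥ fromE n x) ⬝ᵥ fromE n x / (2 * hb) : ℝ) : ℂ)) *
            (((Y.det ^ (-(1:ℝ)/4) : ℝ) : ℂ) *
              Complex.exp (-(Complex.I *
                (((X *ᵥ fromE n x) ⬝ᵥ fromE n x / (2 * hb) : ℝ) : ℂ))) * ψ x)
          = (((Y.det ^ ((1:ℝ)/4) : ℝ) : ℂ) * ((Y.det ^ (-(1:ℝ)/4) : ℝ) : ℂ)) *
            (Complex.exp (Complex.I * (((X *ᵥ fromE n x) ⬝ᵥ fromE n x / (2 * hb) : ℝ) : ℂ)) *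
              Complex.exp (-(Complex.I *
                (((X *ᵥ fromE n x) ⬝ᵥ fromE n x / (2 * hb) : ℝ) : ℂ)))) * ψ x from by ring,
          ← Complex.exp_add, add_neg_cancel, Complex.exp_zero, mul_one]
        rw [← Complex.ofReal_mul, ← Real.rpow_add hdY]
        norm_num
  · constructor
    · -- U gauss0 = gaussM
      have hπ : (0:ℝ) < Real.pi * hb := by positivity
      funext x
      simp only [UXY, gauss0, gaussM]
      rw [show fromE n x = x from rfl]
      rw [normSq_R hRsym hRR x]
      have hquad : ((X.map ((↑) : ℝ → ℂ) + Complex.I • Y.map ((↑) : ℝ → ℂ)) *ᵥ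
          (fun i => (x i : ℂ))) ⬝ᵥ (fun i => (x i : ℂ))
          = (((X *ᵥ x) ⬝ᵥ x : ℝ) : ℂ) + Complex.I * (((Y *ᵥ x) ⬝ᵥ x : ℝ) : ℂ) := by
        simp only [add_mulVec, smul_mulVec, add_dotProduct, smul_dotProduct, smul_eq_mul,
          castQuad]
      rw [hquad]
      have hcd : ((Y.det / (Real.pi*hb)^n) ^ ((1:ℝ)/4) : ℝ)
          = Y.det ^ ((1:ℝ)/4) * (Real.pi*hb) ^ (-(n:ℝ)/4) := by
        rw [Real.div_rpow hdY.le (by positivity), ← Real.rpow_natCast (Real.pi*hb) n,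
          ← Real.rpow_mul hπ.le, div_eq_mul_inv, ← Real.rpow_neg (by positivity)]
        congr 1
        ring
      rw [hcd]
      push_cast
      rw [show ((Y.det ^ ((1:ℝ)/4) : ℝ) : ℂ) *
            Complex.exp (Complex.I * (((X *ᵥ x) ⬝ᵥ x : ℝ) / (2 * hb) : ℂ)) *
            (((Real.pi*hb) ^ (-(n:ℝ)/4) : ℝ) *
              Complex.exp ((-((Y *ᵥ x) ⬝ᵥ x : ℝ) / (2*hb) : ℂ)))
          = ((Y.det ^ ((1:ℝ)/4) : ℝ) : ℂ) * (((Real.pi*hb) ^ (-(n:ℝ)/4) : ℝ) : ℂ) *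
            (Complex.exp (Complex.I * (((X *ᵥ x) ⬝ᵥ x : ℝ) / (2 * hb) : ℂ)) *
             Complex.exp ((-((Y *ᵥ x) ⬝ᵥ x : ℝ) / (2*hb) : ℂ))) from by ring,
        ← Complex.exp_add]
      congr 2
      have hbne : ((hb:ℂ)) ≠ 0 := by exact_mod_cast hhb.ne'
      field_simp
      linear_combination (-(((Y *ᵥ x) ⬝ᵥ x : ℝ) : ℂ)) * Complex.I_sq
    · constructor
      · -- covariance
        intro ψ z
        funext x
        simp only [UXY, HW, SXY]
        have harg : toE n (R *ᵥ fromE n x) - z.1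
            = toE n (R *ᵥ fromE n (x - toE n (R⁻¹ *ᵥ fromE n z.1))) := by
          have h1 : fromE n (x - toE n (R⁻¹ *ᵥ fromE n z.1))
              = fromE n x - R⁻¹ *ᵥ fromE n z.1 := rfl
          rw [h1, mulVec_sub, hRRinv]
          rfl
        rw [← harg]
        refine exp_shuffle _ _ _ _ _ _ ?_
        simp only [inner_dot, fromE_toE]
        have h1 : fromE n (x - toE n (R⁻¹ *ᵥ fromE n z.1))
            = fromE n x - R⁻¹ *ᵥ fromE n z.1 := rfl
        rw [h1]
        set vx := fromE n x
        set a := fromE n z.1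
        set b := fromE n z.2
        set u := R⁻¹ *ᵥ a with hu
        have e1 : (X *ᵥ (vx - u)) ⬝ᵥ (vx - u)
            = (X *ᵥ vx) ⬝ᵥ vx - 2 * ((X *ᵥ u) ⬝ᵥ vx) + (X *ᵥ u) ⬝ᵥ u := by
          simp only [mulVec_sub, sub_dotProduct, dotProduct_sub]
          rw [mulVec_dot_comm X hX vx u]
          ring
        have e2 : (R *ᵥ b) ⬝ᵥ vx = b ⬝ᵥ (R *ᵥ vx) := by
          rw [mulVec_dot_comm R hRsym, dotProduct_comm]
        have e3 : (R *ᵥ b) ⬝ᵥ u = b ⬝ᵥ a := by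
          rw [mulVec_dot_comm R hRsym, hu, hRRinv, dotProduct_comm]
        simp only [add_dotProduct]
        rw [e1, e2, e3]
        field_simp
        ring
      · -- symplectic
        intro z w
        have key : ∀ b a' : Fin n → ℝ, (R *ᵥ b) ⬝ᵥ (R⁻¹ *ᵥ a') = b ⬝ᵥ a' := by
          intro b a'
          rw [mulVec_dot_comm R hRsym, hRRinv, dotProduct_comm]
        simp only [sform, SXY, inner_dot, fromE_toE, add_dotProduct]
        rw [key, key, mulVec_dot_comm X hX]
        ring
end
end

section
/- Let ℏ > 0, let X and Y be real symmetric n×n matrices with Y positive definite, set M = X + iY, and let φ_M^ℏ(x) = (det Y / (πℏ)ⁿ)^{1/4} exp(i M x·x / 2ℏ) and φ₀^ℏ(x) = (πℏ)^{−n/4} exp(−|x|²/2ℏ). Let S^{−1} be the symplectic matrix acting by S^{−1}(x,p) = (Y^{1/2} x, −Y^{−1/2} X x + Y^{−1/2} p), i.e. S^{−1} = [[Y^{1/2}, 0],[−Y^{−1/2} X, Y^{−1/2}]]. Then for every countable subset Λ of ℝ^{2n} and all a, b > 0, the Gabor system G(φ_M^ℏ, Λ) is an ℏ-frame with bounds a,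 b if and only if G(φ₀^ℏ, S^{−1}Λ) is an ℏ-frame with bounds a, b. -/
open MeasureTheory Matrix Complex
open scoped RealInnerProductSpace ENNReal

noncomputable section

/-- The symplectic matrix `S⁻¹ = [[Y^{1/2}, 0],[−Y^{−1/2}X, Y^{−1/2}]]`, acting by
`S⁻¹(x,p) = (Y^{1/2}x, −Y^{−1/2}Xx + Y^{−1/2}p)`, where `R = Y^{1/2}`. -/
def SinvXY (n : ℕ) (X R : Matrix (Fin n) (Fin n) ℝ) (z : E n × E n) : E n × E n :=
  (toE n (R *ᵥ fromE n z.1),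
    toE n (-(R⁻¹ *ᵥ (X *ᵥ fromE n z.1)) + R⁻¹ *ᵥ fromE n z.2))



namespace Stmt19Aux

variable {n : ℕ}

lemma dpAux (A : Matrix (Fin n) (Fin n) ℝ) (u v : Fin n → ℝ) :
    (A *ᵥ u) ⬝ᵥ v = u ⬝ᵥ (Aᵀ *ᵥ v) := by
  simp only [dotProduct, Matrix.mulVec, Matrix.transpose_apply, Finset.sum_mul, Finset.mul_sum]
  rw [Finset.sum_comm]
  exact Finset.sum_congr rfl fun i _ => Finset.sum_congr rfl fun j _ => by ring

def matEquiv (n : ℕ) (A : Matrix (Fin n) (Fin n) ℝ) (hA : IsUnit A.det) : E n ≃ₗ[ℝ] E n where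
  toFun x := toE n (A *ᵥ fromE n x)
  invFun x := toE n (A⁻¹ *ᵥ fromE n x)
  map_add' x y := by
    show toE n (A *ᵥ (fromE n x + fromE n y)) = _
    simp [Matrix.mulVec_add, toE, fromE]
  map_smul' c x := by
    show toE n (A *ᵥ (c • fromE n x)) = _
    simp [Matrix.mulVec_smul, toE, fromE]
  left_inv x := by
    show toE n (A⁻¹ *ᵥ (A *ᵥ fromE n x)) = x
    rw [Matrix.mulVec_mulVec, Matrix.nonsing_inv_mul A hA, Matrix.one_mulVec]; rfl
  right_inv x := by
    show toE n (A *ᵥ (A⁻¹ *ᵥ fromE n x)) = x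
    rw [Matrix.mulVec_mulVec, Matrix.mul_nonsing_inv A hA, Matrix.one_mulVec]; rfl

lemma matEquiv_det (n : ℕ) (A : Matrix (Fin n) (Fin n) ℝ) (hA : IsUnit A.det) :
    LinearMap.det ((matEquiv n A hA : E n ≃ₗ[ℝ] E n) : E n →ₗ[ℝ] E n) = A.det := by
  rw [← LinearMap.det_toMatrix (PiLp.basisFun 2 ℝ (Fin n))]
  congr 1
  ext i j
  simp [LinearMap.toMatrix_apply, matEquiv, toE, fromE, Matrix.mulVec,
    dotProduct, EuclideanSpace.single_apply]

def matMeasEquiv (n : ℕ) (A : Matrix (Fin n) (Fin n) ℝ) (hA : IsUnit A.det) : E n ≃ᵐ E n :=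
  (matEquiv n A hA).toContinuousLinearEquiv.toHomeomorph.toMeasurableEquiv

lemma matMeasEquiv_apply (A : Matrix (Fin n) (Fin n) ℝ) (hA : IsUnit A.det) (x : E n) :
    matMeasEquiv n A hA x = toE n (A *ᵥ fromE n x) := rfl

lemma map_matMeasEquiv (A : Matrix (Fin n) (Fin n) ℝ) (hA : IsUnit A.det) :
    Measure.map (matMeasEquiv n A hA) volume = ENNReal.ofReal |A.det⁻¹| • volume := by
  have h : (matMeasEquiv n A hA : E n → E n)
      = ((matEquiv n A hA : E n ≃ₗ[ℝ] E n) : E n →ₗ[ℝ] E n) := rfl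
  rw [h, Measure.map_linearMap_addHaar_eq_smul_addHaar _ (by
    rw [matEquiv_det]; exact hA.ne_zero ∘ fun h => by simp_all), matEquiv_det]

lemma integral_comp_mulVec {G : Type*} [NormedAddCommGroup G] [NormedSpace ℝ G]
    (A : Matrix (Fin n) (Fin n) ℝ) (hA : IsUnit A.det) (f : E n → G) :
    ∫ x, f (toE n (A *ᵥ fromE n x)) = |A.det|⁻¹ • ∫ x, f x := by
  have h1 : ∫ x, f (toE n (A *ᵥ fromE n x)) = ∫ x, f (matMeasEquiv n A hA x) := by
    simp_rw [matMeasEquiv_apply]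
  rw [h1, ← MeasureTheory.integral_map_equiv, map_matMeasEquiv A hA,
    integral_smul_measure, ENNReal.toReal_ofReal (abs_nonneg _), abs_inv]

lemma memLp_comp_mulVec (A : Matrix (Fin n) (Fin n) ℝ) (hA : IsUnit A.det)
    {ψ : E n → ℂ} (hψ : MemLp ψ 2 volume) :
    MemLp (fun x => ψ (toE n (A *ᵥ fromE n x))) 2 volume := by
  have hml : (fun x => ψ (toE n (A *ᵥ fromE n x))) = ψ ∘ (matMeasEquiv n A hA) := by
    funext x; rw [Function.comp_apply, matMeasEquiv_apply]
  have hqmp : Measure.QuasiMeasurePreserving (matMeasEquiv n A hA)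
      (volume : Measure (E n)) volume :=
    ⟨(matMeasEquiv n A hA).measurable, by
      rw [map_matMeasEquiv A hA]; exact Measure.smul_absolutelyContinuous⟩
  have hsm : AEStronglyMeasurable ψ (Measure.map (matMeasEquiv n A hA) volume) := by
    rw [map_matMeasEquiv A hA]
    exact hψ.aestronglyMeasurable.mono_ac Measure.smul_absolutelyContinuous
  rw [hml]
  refine ⟨hψ.aestronglyMeasurable.comp_quasiMeasurePreserving hqmp, ?_⟩
  rw [← eLpNorm_map_measure hsm (matMeasEquiv n A hA).measurable.aemeasurable,
    map_matMeasEquiv A hA, eLpNorm_smul_measure_of_ne_top (by norm_num : (2:ℝ≥0∞) ≠ ∞)]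
  rw [smul_eq_mul]
  exact ENNReal.mul_lt_top
    (ENNReal.rpow_lt_top_of_nonneg (by norm_num) ENNReal.ofReal_ne_top) hψ.2

def chirpPhase (n : ℕ) (hb : ℝ) (P : Matrix (Fin n) (Fin n) ℝ) (x : E n) : ℝ :=
  ((P *ᵥ fromE n x) ⬝ᵥ fromE n x) / (2*hb)

lemma continuous_chirpPhase (hb : ℝ) (P : Matrix (Fin n) (Fin n) ℝ) :
    Continuous (chirpPhase n hb P) := by
  have h : chirpPhase n hb P = fun x : E n => (∑ i, (∑ j, P i j * x j) * x i) / (2*hb) := by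
    funext x; simp [chirpPhase, dotProduct, Matrix.mulVec, fromE]
  rw [h]
  have hc : ∀ i : Fin n, Continuous (fun x : E n => x i) :=
    fun i => (continuous_apply i).comp (PiLp.continuous_ofLp 2 (fun _ : Fin n => ℝ))
  fun_prop

/-- chirp (quadratic phase) times dilation operator. -/
def chirpDil (n : ℕ) (hb c : ℝ) (P A : Matrix (Fin n) (Fin n) ℝ) (ψ : E n → ℂ) : E n → ℂ :=
  fun x => (c : ℂ) * Complex.exp (Complex.I * ((chirpPhase n hb P x : ℝ) : ℂ)) *
    ψ (toE n (A *ᵥ fromE n x))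

lemma norm_chirpDil (hb c : ℝ) (P A : Matrix (Fin n) (Fin n) ℝ) (ψ : E n → ℂ) (x : E n) :
    ‖chirpDil n hb c P A ψ x‖ = |c| * ‖ψ (toE n (A *ᵥ fromE n x))‖ := by
  simp [chirpDil, Complex.norm_exp, abs_of_nonneg, mul_assoc]

lemma memLp_chirpDil (hb c : ℝ) (P A : Matrix (Fin n) (Fin n) ℝ) (hA : IsUnit A.det)
    {ψ : E n → ℂ} (hψ : MemLp ψ 2 volume) :
    MemLp (chirpDil n hb c P A ψ) 2 volume := by
  have hg := memLp_comp_mulVec A hA hψ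
  have hcont : Continuous (fun x : E n =>
      (c : ℂ) * Complex.exp (Complex.I * ((chirpPhase n hb P x : ℝ) : ℂ))) := by
    have := continuous_chirpPhase (n := n) hb P
    fun_prop
  refine MemLp.of_le_mul (c := |c|) hg
    (hcont.aestronglyMeasurable.mul hg.aestronglyMeasurable) ?_
  filter_upwards with x
  exact le_of_eq (norm_chirpDil hb c P A ψ x)

lemma integral_sq_chirpDil (hb c : ℝ) (hc : 0 ≤ c) (P A : Matrix (Fin n) (Fin n) ℝ)
    (hA : IsUnit A.det) (ψ : E n → ℂ) :
    ∫ x, ‖chirpDil n hb c P A ψ x‖^2 = (c^2 * |A.det|⁻¹) * ∫ x, ‖ψ x‖^2 := by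
  have h1 : ∀ x, ‖chirpDil n hb c P A ψ x‖^2 = c^2 * ‖ψ (toE n (A *ᵥ fromE n x))‖^2 := by
    intro x; rw [norm_chirpDil, mul_pow, _root_.abs_of_nonneg hc]
  simp_rw [h1]
  rw [integral_const_mul, integral_comp_mulVec A hA (fun u => ‖ψ u‖^2), smul_eq_mul]
  ring

lemma dpWR {R : Matrix (Fin n) (Fin n) ℝ} (hRsym : Rᵀ = R) (hdet : IsUnit R.det)
    (u v : Fin n → ℝ) : (R⁻¹ *ᵥ u) ⬝ᵥ (R *ᵥ v) = u ⬝ᵥ v := by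
  rw [dpAux, Matrix.transpose_nonsing_inv, hRsym, Matrix.mulVec_mulVec,
    Matrix.nonsing_inv_mul R hdet, Matrix.one_mulVec]

lemma dpXsym {X : Matrix (Fin n) (Fin n) ℝ} (hX : Xᵀ = X) (u v : Fin n → ℝ) :
    (X *ᵥ u) ⬝ᵥ v = (X *ᵥ v) ⬝ᵥ u := by
  rw [dpAux, hX, dotProduct_comm]

lemma real_ii {X R : Matrix (Fin n) (Fin n) ℝ} (hX : Xᵀ = X) (hRsym : Rᵀ = R)
    (hdet : IsUnit R.det) (p x₀ yv : Fin n → ℝ) :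
    p ⬝ᵥ yv - p ⬝ᵥ x₀ / 2 + (X *ᵥ (yv - x₀)) ⬝ᵥ (yv - x₀) / 2
      = (X *ᵥ yv) ⬝ᵥ yv / 2 + ((-(R⁻¹ *ᵥ (X *ᵥ x₀)) + R⁻¹ *ᵥ p) ⬝ᵥ (R *ᵥ yv)
          - (-(R⁻¹ *ᵥ (X *ᵥ x₀)) + R⁻¹ *ᵥ p) ⬝ᵥ (R *ᵥ x₀) / 2) := by
  simp only [Matrix.mulVec_sub, sub_dotProduct, dotProduct_sub, add_dotProduct,
    neg_dotProduct, dpWR hRsym hdet]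
  rw [dpXsym hX x₀ yv]
  ring

lemma real_i {R : Matrix (Fin n) (Fin n) ℝ} (hRsym : Rᵀ = R) (Y : Matrix (Fin n) (Fin n) ℝ)
    (hRR : R * R = Y) (u : Fin n → ℝ) :
    (R *ᵥ u) ⬝ᵥ (R *ᵥ u) = (Y *ᵥ u) ⬝ᵥ u := by
  rw [dpAux, hRsym, Matrix.mulVec_mulVec, hRR, dotProduct_comm]

lemma consts (hb : ℝ) (hhb : 0 < hb) (R Y : Matrix (Fin n) (Fin n) ℝ)
    (hdR : 0 < R.det) (hRR : R * R = Y) :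
    (Y.det / (Real.pi * hb) ^ n) ^ ((1:ℝ)/4)
      = R.det ^ ((1:ℝ)/2) * (Real.pi * hb) ^ (-(n:ℝ)/4) := by
  have hpi : 0 < Real.pi * hb := mul_pos Real.pi_pos hhb
  have hYdet : Y.det = R.det ^ 2 := by rw [← hRR, Matrix.det_mul, sq]
  rw [hYdet, Real.div_rpow (by positivity) (by positivity),
    ← Real.rpow_natCast (R.det) 2, ← Real.rpow_mul hdR.le,
    ← Real.rpow_natCast (Real.pi * hb) n, ← Real.rpow_mul hpi.le,
    div_eq_mul_inv, ← Real.rpow_neg hpi.le]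
  congr 1
  · norm_num
  · ring_nf

lemma cast_quad (A : Matrix (Fin n) (Fin n) ℝ) (x : Fin n → ℝ) :
    ((A.map ((↑) : ℝ → ℂ)) *ᵥ (fun i => (x i : ℂ))) ⬝ᵥ (fun i => (x i : ℂ))
      = (((A *ᵥ x) ⬝ᵥ x : ℝ) : ℂ) := by
  simp [Matrix.mulVec, dotProduct, Finset.sum_mul]

lemma inner_dp (x y : E n) : ⟪x, y⟫ = fromE n x ⬝ᵥ fromE n y := by
  simp [PiLp.inner_apply, dotProduct, fromE, RCLike.inner_apply, mul_comm]

lemma norm_sq_dp (x : E n) : ‖x‖^2 = fromE n x ⬝ᵥ fromE n x := by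
  rw [← real_inner_self_eq_norm_sq]; exact inner_dp x x
lemma key_pointwise (hb : ℝ) (hhb : 0 < hb) (X Y R : Matrix (Fin n) (Fin n) ℝ)
    (hX : Xᵀ = X) (hRsym : Rᵀ = R) (hdR : 0 < R.det) (hRR : R * R = Y)
    (z : E n × E n) (y : E n) :
    HW n hb z (gaussM n hb X Y) y =
      ((R.det ^ ((1:ℝ)/2) : ℝ) : ℂ) *
        Complex.exp (Complex.I * ((((X *ᵥ fromE n y) ⬝ᵥ fromE n y) / (2*hb) : ℝ) : ℂ)) *
        HW n hb (SinvXY n X R z) (gauss0 n hb) (toE n (R *ᵥ fromE n y)) := by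
  have hdet : IsUnit R.det := isUnit_iff_ne_zero.2 hdR.ne'
  set p := fromE n z.2
  set x₀ := fromE n z.1
  set yv := fromE n y
  have hbC : (hb : ℂ) ≠ 0 := by exact_mod_cast hhb.ne'
  -- unfold
  unfold HW gaussM gauss0 SinvXY
  simp only
  -- complex quadratic form
  have hquad : ((X.map ((↑) : ℝ → ℂ) + Complex.I • Y.map ((↑) : ℝ → ℂ)) *ᵥ
      (fun i => ((y - z.1) i : ℂ))) ⬝ᵥ (fun i => ((y - z.1) i : ℂ))
      = (((X *ᵥ (yv - x₀)) ⬝ᵥ (yv - x₀) : ℝ) : ℂ)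
        + Complex.I * (((Y *ᵥ (yv - x₀)) ⬝ᵥ (yv - x₀) : ℝ) : ℂ) := by
    rw [Matrix.add_mulVec, add_dotProduct, Matrix.smul_mulVec,
      smul_dotProduct, smul_eq_mul, cast_quad, cast_quad]
    rfl
  rw [hquad]
  -- norms and inners
  have hsub : toE n (R *ᵥ yv) - toE n (R *ᵥ x₀) = toE n (R *ᵥ (yv - x₀)) := by
    show toE n (R *ᵥ yv - R *ᵥ x₀) = _
    rw [Matrix.mulVec_sub]
  rw [show ((toE n (R *ᵥ yv) : E n) - (toE n (R *ᵥ x₀) : E n)) = toE n (R *ᵥ (yv - x₀)) from hsub]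
  have hnrm : ‖toE n (R *ᵥ (yv - x₀))‖^2 = (Y *ᵥ (yv - x₀)) ⬝ᵥ (yv - x₀) := by
    rw [norm_sq_dp]
    exact real_i hRsym Y hRR (yv - x₀)
  rw [hnrm]
  rw [inner_dp z.2 y, inner_dp z.2 z.1,
    inner_dp (toE n (-(R⁻¹ *ᵥ (X *ᵥ x₀)) + R⁻¹ *ᵥ p)) (toE n (R *ᵥ yv)),
    inner_dp (toE n (-(R⁻¹ *ᵥ (X *ᵥ x₀)) + R⁻¹ *ᵥ p)) (toE n (R *ᵥ x₀))]
  -- abbreviations for real scalars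
  set q₀ := -(R⁻¹ *ᵥ (X *ᵥ x₀)) + R⁻¹ *ᵥ p with hq₀
  set s1 : ℝ := p ⬝ᵥ yv
  set s2 : ℝ := p ⬝ᵥ x₀
  set qXu : ℝ := (X *ᵥ (yv - x₀)) ⬝ᵥ (yv - x₀)
  set qYu : ℝ := (Y *ᵥ (yv - x₀)) ⬝ᵥ (yv - x₀)
  set qXy : ℝ := (X *ᵥ yv) ⬝ᵥ yv
  set b1 : ℝ := q₀ ⬝ᵥ (R *ᵥ yv)
  set b2 : ℝ := q₀ ⬝ᵥ (R *ᵥ x₀)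
  -- constants
  rw [consts hb hhb R Y hdR hRR]
  have hii : s1 - s2 / 2 + qXu / 2 = qXy / 2 + (b1 - b2 / 2) :=
    real_ii hX hRsym hdet p x₀ yv
  -- now pure complex exp algebra
  rw [Complex.ofReal_mul, Complex.ofReal_mul, Complex.ofReal_exp]
  rw [show Complex.I * ((((qXu : ℝ) : ℂ)) + Complex.I * ((qYu : ℝ) : ℂ)) / (2 * (hb : ℂ))
      = Complex.I * (((qXu / (2*hb) : ℝ) : ℂ)) + (((-qYu / (2*hb) : ℝ) : ℂ)) by
    push_cast
    field_simp
    linear_combination ((qYu : ℝ) : ℂ) * Complex.I_sq]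
  rw [Complex.exp_add]
  simp only [show ∀ v : Fin n → ℝ, fromE n (toE n v) = v from fun _ => rfl]
  have hiiC : (s1:ℂ) - s2/2 + qXu/2 = qXy/2 + (b1 - b2/2) := by exact_mod_cast hii
  set c1 : ℂ := ((R.det ^ ((1:ℝ)/2) : ℝ) : ℂ)
  set c2 : ℂ := (((Real.pi * hb) ^ (-(n:ℝ)/4) : ℝ) : ℂ)
  set A1 : ℂ := Complex.I * (((s1 - s2/2)/hb : ℝ) : ℂ)
  set A2 : ℂ := Complex.I * ((qXu/(2*hb) : ℝ) : ℂ)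
  set A3 : ℂ := ((-qYu/(2*hb) : ℝ) : ℂ)
  set B1 : ℂ := Complex.I * ((qXy/(2*hb) : ℝ) : ℂ)
  set B2 : ℂ := Complex.I * (((b1 - b2/2)/hb : ℝ) : ℂ)
  calc Complex.exp A1 * (c1 * c2 * (Complex.exp A2 * Complex.exp A3))
      = c1 * c2 * Complex.exp (A1 + (A2 + A3)) := by
        rw [Complex.exp_add, Complex.exp_add]; ring
    _ = c1 * c2 * Complex.exp (B1 + (B2 + A3)) := by
        congr 2
        simp only [A1, A2, A3, B1, B2]
        push_cast
        field_simp
        linear_combination 2 * Complex.I * hiiC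
    _ = c1 * Complex.exp B1 * (Complex.exp B2 * (c2 * Complex.exp A3)) := by
        rw [Complex.exp_add, Complex.exp_add]; ring

lemma key_integral (hb : ℝ) (X Y R : Matrix (Fin n) (Fin n) ℝ) (hhb : 0 < hb) (hX : Xᵀ = X)
    (hRsym : Rᵀ = R) (hdR : 0 < R.det) (hRR : R * R = Y) (ψ : E n → ℂ) (z : E n × E n) :
    ∫ x, ψ x * (starRingEnd ℂ) (HW n hb z (gaussM n hb X Y) x)
      = ∫ x, chirpDil n hb (R.det ^ (-(1:ℝ)/2)) (-(R⁻¹ * X * R⁻¹)) R⁻¹ ψ x *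
          (starRingEnd ℂ) (HW n hb (SinvXY n X R z) (gauss0 n hb) x) := by
  have hdet : IsUnit R.det := isUnit_iff_ne_zero.2 hdR.ne'
  set h : E n → ℂ := fun x => chirpDil n hb (R.det ^ (-(1:ℝ)/2)) (-(R⁻¹ * X * R⁻¹)) R⁻¹ ψ x *
      (starRingEnd ℂ) (HW n hb (SinvXY n X R z) (gauss0 n hb) x) with hg
  have h1 := integral_comp_mulVec R hdet h
  have h2 : ∫ x, h x = |R.det| • ∫ x, h (toE n (R *ᵥ fromE n x)) := by
    rw [h1, smul_smul, mul_inv_cancel₀ (abs_ne_zero.2 hdR.ne'), one_smul]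
  show _ = ∫ x, h x
  rw [h2, ← integral_smul]
  congr 1
  funext x
  -- pointwise identity
  have hRW : ∀ v : Fin n → ℝ, R⁻¹ *ᵥ (R *ᵥ v) = v := fun v => by
    rw [Matrix.mulVec_mulVec, Matrix.nonsing_inv_mul R hdet, Matrix.one_mulVec]
  have hphase : chirpPhase n hb (-(R⁻¹ * X * R⁻¹)) (toE n (R *ᵥ fromE n x))
      = -(((X *ᵥ fromE n x) ⬝ᵥ fromE n x) / (2*hb)) := by
    unfold chirpPhase
    rw [show fromE n (toE n (R *ᵥ fromE n x)) = R *ᵥ fromE n x from rfl]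
    rw [Matrix.neg_mulVec, neg_dotProduct, Matrix.mulVec_mulVec,
      show R⁻¹ * X * R⁻¹ * R = R⁻¹ * X by
        rw [Matrix.mul_assoc, Matrix.nonsing_inv_mul R hdet, Matrix.mul_one],
      ← Matrix.mulVec_mulVec, dpWR hRsym hdet, neg_div]
  have hcc : R.det * R.det ^ (-(1:ℝ)/2) = R.det ^ ((1:ℝ)/2) := by
    nth_rewrite 1 [← Real.rpow_one R.det]
    rw [← Real.rpow_add hdR]
    norm_num
  simp only [h, chirpDil, hphase]
  rw [show toE n (R⁻¹ *ᵥ fromE n (toE n (R *ᵥ fromE n x))) = x from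
    congrArg (toE n) (hRW (fromE n x)), key_pointwise hb hhb X Y R hX hRsym hdR hRR z x]
  rw [_root_.map_mul, _root_.map_mul, Complex.conj_ofReal, ← Complex.exp_conj]
  have harg : (starRingEnd ℂ) (Complex.I * ((((X *ᵥ fromE n x) ⬝ᵥ fromE n x) / (2*hb) : ℝ) : ℂ))
      = Complex.I * ((( -(((X *ᵥ fromE n x) ⬝ᵥ fromE n x) / (2*hb)) : ℝ) : ℂ)) := by
    rw [_root_.map_mul, Complex.conj_I, Complex.conj_ofReal]
    push_cast
    ring
  rw [harg]
  have hc2 : ((R.det : ℝ) : ℂ) * ((R.det ^ (-(1:ℝ)/2) : ℝ) : ℂ) = ((R.det ^ ((1:ℝ)/2) : ℝ) : ℂ) := by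
    exact_mod_cast congrArg (fun t : ℝ => (t : ℂ)) hcc
  rw [show (|R.det| : ℝ) = R.det from abs_of_pos hdR]
  rw [real_smul]
  linear_combination (-(Complex.exp (Complex.I * ((( -(((X *ᵥ fromE n x) ⬝ᵥ fromE n x) / (2*hb)) : ℝ) : ℂ))) *
    ψ x * (starRingEnd ℂ) (HW n hb (SinvXY n X R z) (gauss0 n hb) (toE n (R *ᵥ fromE n x))))) * hc2

section main
variable {hb : ℝ} {X Y R : Matrix (Fin n) (Fin n) ℝ}

lemma Sinv_inj (hdet : IsUnit R.det) : Function.Injective (SinvXY n X R) := by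
  intro z w hzw
  have h1 : toE n (R *ᵥ fromE n z.1) = toE n (R *ᵥ fromE n w.1) := congrArg Prod.fst hzw
  have h1' : fromE n z.1 = fromE n w.1 := by
    have := congrArg (fun v => R⁻¹ *ᵥ fromE n v) h1
    simpa [toE, fromE, Matrix.mulVec_mulVec, Matrix.nonsing_inv_mul R hdet,
      Matrix.one_mulVec] using this
  have h2 := congrArg Prod.snd hzw
  simp only [SinvXY, h1'] at h2
  have h2' : R⁻¹ *ᵥ fromE n z.2 = R⁻¹ *ᵥ fromE n w.2 := by
    have := congrArg (fun v : E n => fromE n v) h2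
    simpa [toE, fromE] using this
  have h2'' : fromE n z.2 = fromE n w.2 := by
    have := congrArg (fun v => R *ᵥ v) h2'
    simpa [Matrix.mulVec_mulVec, Matrix.mul_nonsing_inv R hdet, Matrix.one_mulVec] using this
  exact Prod.ext (WithLp.ofLp_injective 2 h1') (WithLp.ofLp_injective 2 h2'')

lemma UV_id (hhb : 0 < hb) (hX : Xᵀ = X) (hRsym : Rᵀ = R) (hdR : 0 < R.det) (ψ : E n → ℂ) :
    chirpDil n hb (R.det ^ (-(1:ℝ)/2)) (-(R⁻¹ * X * R⁻¹)) R⁻¹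
      (chirpDil n hb (R.det ^ ((1:ℝ)/2)) X R ψ) = ψ := by
  have hdet : IsUnit R.det := isUnit_iff_ne_zero.2 hdR.ne'
  funext x
  unfold chirpDil
  have hRW : toE n (R *ᵥ fromE n (toE n (R⁻¹ *ᵥ fromE n x))) = x := by
    show toE n (R *ᵥ (R⁻¹ *ᵥ fromE n x)) = x
    rw [Matrix.mulVec_mulVec, Matrix.mul_nonsing_inv R hdet, Matrix.one_mulVec]; rfl
  rw [hRW]
  have hph : chirpPhase n hb (-(R⁻¹ * X * R⁻¹)) x
      = -(chirpPhase n hb X (toE n (R⁻¹ *ᵥ fromE n x))) := by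
    unfold chirpPhase
    rw [show fromE n (toE n (R⁻¹ *ᵥ fromE n x)) = R⁻¹ *ᵥ fromE n x from rfl,
      Matrix.neg_mulVec, neg_dotProduct, neg_div, neg_inj]
    rw [← Matrix.mulVec_mulVec, ← Matrix.mulVec_mulVec, dpAux, Matrix.transpose_nonsing_inv, hRsym]
  have hcc : (R.det ^ (-(1:ℝ)/2)) * (R.det ^ ((1:ℝ)/2)) = 1 := by
    rw [← Real.rpow_add hdR]; norm_num
  have hccC : ((R.det ^ (-(1:ℝ)/2) : ℝ) : ℂ) * ((R.det ^ ((1:ℝ)/2) : ℝ) : ℂ) = 1 := by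
    exact_mod_cast congrArg (fun t : ℝ => (t : ℂ)) hcc
  have hee : Complex.exp (Complex.I * ((chirpPhase n hb (-(R⁻¹ * X * R⁻¹)) x : ℝ) : ℂ)) *
      Complex.exp (Complex.I * ((chirpPhase n hb X (toE n (R⁻¹ *ᵥ fromE n x)) : ℝ) : ℂ)) = 1 := by
    rw [← Complex.exp_add, hph]
    push_cast
    rw [show Complex.I * -(chirpPhase n hb X (toE n (R⁻¹ *ᵥ fromE n x)) : ℂ) +
      Complex.I * (chirpPhase n hb X (toE n (R⁻¹ *ᵥ fromE n x)) : ℂ) = 0 by ring,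
      Complex.exp_zero]
  rw [show ((R.det ^ (-(1:ℝ)/2) : ℝ) : ℂ) *
      Complex.exp (Complex.I * ((chirpPhase n hb (-(R⁻¹ * X * R⁻¹)) x : ℝ) : ℂ)) *
      (((R.det ^ ((1:ℝ)/2) : ℝ) : ℂ) *
        Complex.exp (Complex.I * ((chirpPhase n hb X (toE n (R⁻¹ *ᵥ fromE n x)) : ℝ) : ℂ)) * ψ x)
      = (((R.det ^ (-(1:ℝ)/2) : ℝ) : ℂ) * ((R.det ^ ((1:ℝ)/2) : ℝ) : ℂ)) *
        ((Complex.exp (Complex.I * ((chirpPhase n hb (-(R⁻¹ * X * R⁻¹)) x : ℝ) : ℂ)) *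
          Complex.exp (Complex.I * ((chirpPhase n hb X (toE n (R⁻¹ *ᵥ fromE n x)) : ℝ) : ℂ))) * ψ x)
      from by ring, hccC, hee, one_mul, one_mul]

lemma gaborSum_transport (hhb : 0 < hb) (hX : Xᵀ = X) (hRsym : Rᵀ = R) (hdR : 0 < R.det)
    (hRR : R * R = Y) (Λ : Set (E n × E n)) (ψ : E n → ℂ) :
    gaborSum n hb (gaussM n hb X Y) Λ ψ
      = gaborSum n hb (gauss0 n hb) (SinvXY n X R '' Λ)
          (chirpDil n hb (R.det ^ (-(1:ℝ)/2)) (-(R⁻¹ * X * R⁻¹)) R⁻¹ ψ) := by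
  have hdet : IsUnit R.det := isUnit_iff_ne_zero.2 hdR.ne'
  unfold gaborSum
  rw [← (Equiv.Set.imageOfInjOn (SinvXY n X R) Λ ((Sinv_inj hdet).injOn)).tsum_eq
    (fun w : (SinvXY n X R '' Λ) => ENNReal.ofReal
      (‖∫ x, chirpDil n hb (R.det ^ (-(1:ℝ)/2)) (-(R⁻¹ * X * R⁻¹)) R⁻¹ ψ x *
        (starRingEnd ℂ) (HW n hb (w : E n × E n) (gauss0 n hb) x)‖ ^ 2))]
  apply tsum_congr
  intro z
  rw [key_integral hb X Y R hhb hX hRsym hdR hRR ψ z]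
  rfl


theorem stmt19' {hb : ℝ} {X Y R : Matrix (Fin n) (Fin n) ℝ} (hhb : 0 < hb) (hX : Xᵀ = X) (hY : Yᵀ = Y) (hYpd : Y.PosDef)
    (hRsym : Rᵀ = R) (hRpd : R.PosDef) (hRR : R * R = Y)
    (Λ : Set (E n × E n)) (hΛ : Λ.Countable) (a b : ℝ) (ha : 0 < a) (hbd : 0 < b) :
    IsGaborFrame n hb (gaussM n hb X Y) Λ a b ↔
      IsGaborFrame n hb (gauss0 n hb) (SinvXY n X R '' Λ) a b := by
  have hdR : 0 < R.det := hRpd.det_pos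
  have hdet : IsUnit R.det := isUnit_iff_ne_zero.2 hdR.ne'
  have hdetInv : IsUnit (R⁻¹).det := by
    rw [Matrix.det_nonsing_inv]
    simpa using hdet.inv
  have hUsq : ∀ ψ : E n → ℂ,
      ∫ x, ‖chirpDil n hb (R.det ^ (-(1:ℝ)/2)) (-(R⁻¹ * X * R⁻¹)) R⁻¹ ψ x‖^2
        = ∫ x, ‖ψ x‖^2 := by
    intro ψ
    rw [integral_sq_chirpDil hb _ (Real.rpow_nonneg hdR.le _) _ _ hdetInv ψ]
    have h2 : (R.det ^ (-(1:ℝ)/2))^2 = (R.det)⁻¹ := by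
      rw [← Real.rpow_natCast (R.det ^ (-(1:ℝ)/2)) 2, ← Real.rpow_mul hdR.le]
      norm_num [Real.rpow_neg_one]
    have h3 : (R.det ^ (-(1:ℝ)/2))^2 * |(R⁻¹).det|⁻¹ = 1 := by
      rw [h2, Matrix.det_nonsing_inv, Ring.inverse_eq_inv', abs_inv, inv_inv,
        abs_of_pos hdR, inv_mul_cancel₀ hdR.ne']
    rw [h3, one_mul]
  have hVsq : ∀ ψ : E n → ℂ,
      ∫ x, ‖chirpDil n hb (R.det ^ ((1:ℝ)/2)) X R ψ x‖^2 = ∫ x, ‖ψ x‖^2 := by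
    intro ψ
    rw [integral_sq_chirpDil hb _ (Real.rpow_nonneg hdR.le _) _ _ hdet ψ]
    have h2 : (R.det ^ ((1:ℝ)/2))^2 = R.det := by
      rw [← Real.rpow_natCast (R.det ^ ((1:ℝ)/2)) 2, ← Real.rpow_mul hdR.le]
      norm_num
    rw [h2, abs_of_pos hdR, mul_inv_cancel₀ hdR.ne', one_mul]
  constructor
  · intro h ψ hψ
    set ρ := chirpDil n hb (R.det ^ ((1:ℝ)/2)) X R ψ with hρdef
    have hρ : MemLp ρ 2 volume := memLp_chirpDil hb _ _ _ hdet hψ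
    have hsum := h ρ hρ
    have hU : chirpDil n hb (R.det ^ (-(1:ℝ)/2)) (-(R⁻¹ * X * R⁻¹)) R⁻¹ ρ = ψ :=
      UV_id hhb hX hRsym hdR ψ
    rw [gaborSum_transport hhb hX hRsym hdR hRR Λ ρ, hU, hVsq ψ] at hsum
    exact hsum
  · intro h ψ hψ
    have hUψ : MemLp (chirpDil n hb (R.det ^ (-(1:ℝ)/2)) (-(R⁻¹ * X * R⁻¹)) R⁻¹ ψ) 2 volume :=
      memLp_chirpDil hb _ _ _ hdetInv hψ
    have hsum := h _ hUψ
    rw [hUsq ψ] at hsum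
    rw [gaborSum_transport hhb hX hRsym hdR hRR Λ ψ]
    exact hsum

end main
end Stmt19Aux

/-- frames with a generalized Gaussian window reduce to frames with
the standard Gaussian window: `G(φ_M^ℏ, Λ)` is an `ℏ`-frame with bounds `a,b` iff
`G(φ₀^ℏ, S⁻¹Λ)` is, where `M = X + iY` and
`S⁻¹ = [[Y^{1/2},0],[−Y^{−1/2}X, Y^{−1/2}]]`. -/
theorem stmt19 (n : ℕ) (hb : ℝ) (hhb : 0 < hb)
    (X Y R : Matrix (Fin n) (Fin n) ℝ)
    (hX : Xᵀ = X) (hY : Yᵀ = Y) (hYpd : Y.PosDef)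
    (hRsym : Rᵀ = R) (hRpd : R.PosDef) (hRR : R * R = Y)
    (Λ : Set (E n × E n)) (hΛ : Λ.Countable) (a b : ℝ) (ha : 0 < a) (hbd : 0 < b) :
    IsGaborFrame n hb (gaussM n hb X Y) Λ a b ↔
      IsGaborFrame n hb (gauss0 n hb) (SinvXY n X R '' Λ) a b := by
  exact Stmt19Aux.stmt19' hhb hX hY hYpd hRsym hRpd hRR Λ hΛ a b ha hbd
end
end
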